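/- arXiv:1901.09176 — 4 statements merged into one kernel-verified Lean document; each statement's English description precedes it below -/
import Mathlib

section
/- For every m ≥ 1 and every x ∈ ℝ^m, ∑_{i=1}^m ψ'(x_i) x_i ≥ ‖x⁺‖₁ - m/2, where ‖x⁺‖₁ = ∑_{i=1}^m max(x_i, 0). -/
open scoped BigOperators

noncomputable section

/-- The piecewise function `ψ` from Definition 1 of the paper. -/
def psi (t : ℝ) : ℝ :=
  if t ≤ -1 then -(1/2)
  else if t ≤ 0 then (t+1)^3 - (1/2)*(t+1)^4 - 1/2
  else t

/-- Candidate derivative of `psi`. -/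
def psi' (t : ℝ) : ℝ :=
  if t ≤ -1 then 0
  else if t ≤ 0 then 3*(t+1)^2 - 2*(t+1)^3
  else 1

lemma hasDerivAt_poly (t : ℝ) :
    HasDerivAt (fun t : ℝ => (t+1)^3 - (1/2)*(t+1)^4 - 1/2)
      (3*(t+1)^2 - 2*(t+1)^3) t := by
  have h1 : HasDerivAt (fun t : ℝ => t + 1) 1 t := (hasDerivAt_id t).add_const 1
  have := ((h1.fun_pow 3).fun_sub ((h1.fun_pow 4).const_mul (1/2:ℝ))).sub_const (1/2:ℝ)
  refine this.congr_deriv ?_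
  ring

lemma psi_eq_const {t : ℝ} (ht : t ≤ -1) : psi t = -(1/2) := by
  simp [psi, ht]

lemma psi_eq_poly {t : ℝ} (ht1 : -1 ≤ t) (ht2 : t ≤ 0) :
    psi t = (t+1)^3 - (1/2)*(t+1)^4 - 1/2 := by
  rcases eq_or_lt_of_le ht1 with h | h
  · norm_num [psi, ← h]
  · simp [psi, not_le.mpr h, ht2]

lemma psi_eq_id {t : ℝ} (ht : 0 ≤ t) : psi t = t := by
  rcases eq_or_lt_of_le ht with h | h
  · norm_num [psi, ← h]
  · have h1 : ¬ t ≤ -1 := by linarith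
    have h2 : ¬ t ≤ 0 := not_le.mpr h
    simp [psi, h1, h2]

lemma psi_hasDerivAt (t : ℝ) : HasDerivAt psi (psi' t) t := by
  rcases lt_trichotomy t (-1) with h | h | h
  · have heq : psi =ᶠ[nhds t] (fun _ => -(1/2) : ℝ → ℝ) := by
      filter_upwards [Iio_mem_nhds h] with s hs
      exact psi_eq_const (le_of_lt hs)
    have : HasDerivAt (fun _ : ℝ => -(1/2) : ℝ → ℝ) 0 t := hasDerivAt_const t _
    have h' : psi' t = 0 := by simp [psi', le_of_lt h]
    rw [h']
    exact this.congr_of_eventuallyEq heq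
  · subst h
    have h' : psi' (-1) = 0 := by simp [psi']
    rw [h']
    have hle : HasDerivWithinAt psi 0 (Set.Iic (-1 : ℝ)) (-1) := by
      have : HasDerivWithinAt (fun _ : ℝ => -(1/2) : ℝ → ℝ) 0 (Set.Iic (-1:ℝ)) (-1) :=
        (hasDerivAt_const _ _).hasDerivWithinAt
      exact this.congr (fun s hs => psi_eq_const hs) (psi_eq_const le_rfl)
    have hge : HasDerivWithinAt psi 0 (Set.Icc (-1 : ℝ) 0) (-1) := by
      have hp := (hasDerivAt_poly (-1)).hasDerivWithinAt (s := Set.Icc (-1:ℝ) 0)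
      have hval : (3*((-1:ℝ)+1)^2 - 2*((-1:ℝ)+1)^3) = 0 := by norm_num
      rw [hval] at hp
      exact hp.congr (fun s hs => psi_eq_poly hs.1 hs.2) (psi_eq_poly le_rfl (by norm_num))
    have hU := hle.union hge
    have hmem : Set.Iic (-1:ℝ) ∪ Set.Icc (-1:ℝ) 0 ∈ nhds (-1:ℝ) := by
      have : Set.Iic (0:ℝ) ⊆ Set.Iic (-1:ℝ) ∪ Set.Icc (-1:ℝ) 0 := by
        intro s hs
        rcases le_or_gt s (-1) with h | h
        · exact Or.inl h
        · exact Or.inr ⟨le_of_lt h, hs⟩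
      exact Filter.mem_of_superset (Iic_mem_nhds (by norm_num)) this
    exact hU.hasDerivAt hmem
  · rcases lt_trichotomy t 0 with h0 | h0 | h0
    · have heq : psi =ᶠ[nhds t] (fun t : ℝ => (t+1)^3 - (1/2)*(t+1)^4 - 1/2) := by
        filter_upwards [Ioo_mem_nhds h h0] with s hs
        exact psi_eq_poly (le_of_lt hs.1) (le_of_lt hs.2)
      have h' : psi' t = 3*(t+1)^2 - 2*(t+1)^3 := by
        simp [psi', not_le.mpr h, le_of_lt h0]
      rw [h']
      exact (hasDerivAt_poly t).congr_of_eventuallyEq heq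
    · subst h0
      have h' : psi' 0 = 1 := by norm_num [psi']
      rw [h']
      have hle : HasDerivWithinAt psi 1 (Set.Icc (-1 : ℝ) 0) 0 := by
        have hp := (hasDerivAt_poly 0).hasDerivWithinAt (s := Set.Icc (-1:ℝ) 0)
        have hval : (3*((0:ℝ)+1)^2 - 2*((0:ℝ)+1)^3) = 1 := by norm_num
        rw [hval] at hp
        exact hp.congr (fun s hs => psi_eq_poly hs.1 hs.2) (psi_eq_poly (by norm_num) le_rfl)
      have hge : HasDerivWithinAt psi 1 (Set.Ici (0 : ℝ)) 0 := by
        have : HasDerivWithinAt (fun t : ℝ => t) 1 (Set.Ici (0:ℝ)) 0 :=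
          (hasDerivAt_id 0).hasDerivWithinAt
        exact this.congr (fun s hs => psi_eq_id hs) (psi_eq_id le_rfl)
      have hU := hle.union hge
      have hmem : Set.Icc (-1:ℝ) 0 ∪ Set.Ici (0:ℝ) ∈ nhds (0:ℝ) := by
        have : Set.Ici (-1:ℝ) ⊆ Set.Icc (-1:ℝ) 0 ∪ Set.Ici (0:ℝ) := by
          intro s hs
          rcases le_or_gt s 0 with h | h
          · exact Or.inl ⟨hs, h⟩
          · exact Or.inr (le_of_lt h)
        exact Filter.mem_of_superset (Ici_mem_nhds (by norm_num)) this
      exact hU.hasDerivAt hmem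
    · have heq : psi =ᶠ[nhds t] (fun t : ℝ => t) := by
        filter_upwards [Ioi_mem_nhds h0] with s hs
        exact psi_eq_id (le_of_lt hs)
      have h' : psi' t = 1 := by
        have h1 : ¬ t ≤ -1 := by linarith
        have h2 : ¬ t ≤ 0 := not_le.mpr h0
        simp [psi', h1, h2]
      rw [h']
      exact (hasDerivAt_id t).congr_of_eventuallyEq heq

lemma deriv_psi (t : ℝ) : deriv psi t = psi' t := (psi_hasDerivAt t).deriv

lemma pointwise (t : ℝ) : max t 0 - 1/2 ≤ deriv psi t * t := by
  rw [deriv_psi]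
  rcases le_or_gt t (-1) with h | h
  · have : max t 0 = 0 := max_eq_right (by linarith)
    simp [psi', h, this]
  · rcases le_or_gt t 0 with h0 | h0
    · have hmax : max t 0 = 0 := max_eq_right h0
      have h' : psi' t = 3*(t+1)^2 - 2*(t+1)^3 := by
        simp [psi', not_le.mpr h, h0]
      rw [h', hmax]
      have hu0 : (0:ℝ) < t + 1 := by linarith
      have hu1 : t + 1 ≤ 1 := by linarith
      nlinarith [sq_nonneg ((t+1)^2 - (t+1)), sq_nonneg (2*(t+1) - 1),
        mul_nonneg (sub_nonneg.mpr hu1) (sq_nonneg (2*(t+1)-1)),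
        mul_nonneg hu0.le (sq_nonneg (2*(t+1)-1)),
        mul_nonneg (mul_nonneg hu0.le hu0.le) (sub_nonneg.mpr hu1)]
    · have hmax : max t 0 = t := max_eq_left (le_of_lt h0)
      have h' : psi' t = 1 := by
        have h1 : ¬ t ≤ -1 := by linarith
        simp [psi', h1, not_le.mpr h0]
      rw [h', hmax]
      linarith

/-- For every `m ≥ 1` and `x ∈ ℝ^m`, `∑ i, ψ'(x_i) x_i ≥ ‖x⁺‖₁ - m/2`. -/
theorem stmt_1 (m : ℕ) (hm : 1 ≤ m) (x : Fin m → ℝ) :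
    (∑ i, max (x i) 0) - (m : ℝ) / 2 ≤ ∑ i, deriv psi (x i) * x i := by
  have key : ∑ i, (max (x i) 0 - 1/2) ≤ ∑ i, deriv psi (x i) * x i :=
    Finset.sum_le_sum fun i _ => pointwise (x i)
  have : ∑ i, (max (x i) 0 - (1:ℝ)/2) = (∑ i, max (x i) 0) - (m : ℝ) / 2 := by
    rw [Finset.sum_sub_distrib, Finset.sum_const, Finset.card_fin]
    ring
  linarith [key, this.ge]

end
end

section
/- Assume β > 0 and let δ ∈ (0,1] satisfy (max_{1≤i≤m} γ_i/μ_i - 1)⁺ δ ≤ 1. Then for every p > 1, every x ∈ K₊, and every u ∈ Δ, ⟨b(x,u), ∇V_p(x)⟩ ≤ -p (β/m - δβ - δ m/2 + δ‖x⁻‖₁) V_{p-1}(x), where ‖x⁻‖₁ = ∑_i max(-x_i, 0). -/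
open scoped BigOperators

noncomputable section

/-- `Ψ(x) = ∑ i, ψ(x_i)/μ_i`. -/
def Psi (m : ℕ) (μ : Fin m → ℝ) (x : Fin m → ℝ) : ℝ := ∑ i, psi (x i) / μ i

/-- The Lyapunov function `V_p(x) = (δ Ψ(-x) + Ψ(x) + m / min_i μ_i)^p`. -/
def Vp (m : ℕ) (μ : Fin m → ℝ) (δ p : ℝ) (x : Fin m → ℝ) : ℝ :=
  (δ * Psi m μ (-x) + Psi m μ x + (m : ℝ) / ⨅ i, μ i) ^ p

/-- The drift `b(x,u) = -(β/m) M e - M (x - ⟨e,x⟩⁺ u) - ⟨e,x⟩⁺ Γ u`, written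
componentwise, where `M = diag(μ)` and `Γ = diag(γ)`. -/
def drift (m : ℕ) (μ γ : Fin m → ℝ) (β : ℝ) (x u : Fin m → ℝ) : Fin m → ℝ :=
  fun i => -(β / (m : ℝ)) * μ i - μ i * (x i - max (∑ j, x j) 0 * u i)
    - max (∑ j, x j) 0 * (γ i * u i)

/-! ### Auxiliary development: the derivative of `psi` -/

/-- The derivative of `psi`. -/
def psid (t : ℝ) : ℝ :=
  if t ≤ -1 then 0
  else if t ≤ 0 then 3*(t+1)^2 - 2*(t+1)^3
  else 1

/-- The middle polynomial piece of `psi`. -/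
def Ppoly (t : ℝ) : ℝ := (t+1)^3 - (1/2)*(t+1)^4 - 1/2

lemma hasDerivAt_Ppoly (t : ℝ) : HasDerivAt Ppoly (3*(t+1)^2 - 2*(t+1)^3) t := by
  have hid : HasDerivAt (fun s : ℝ => s + 1) 1 t := (hasDerivAt_id t).add_const 1
  have h3 : HasDerivAt (fun s : ℝ => (s+1)^3) (3*(t+1)^2) t := by
    simpa using hid.fun_pow 3
  have h4 : HasDerivAt (fun s : ℝ => (s+1)^4) (4*(t+1)^3) t := by
    simpa using hid.fun_pow 4
  have := (h3.sub (h4.const_mul (1/2))).sub_const (1/2)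
  exact this.congr_deriv (by ring)

lemma psi_eq_Ppoly_on {y : ℝ} (h1 : -1 ≤ y) (h2 : y ≤ 0) : psi y = Ppoly y := by
  by_cases hy : y ≤ -1
  · have : y = -1 := le_antisymm hy h1
    subst this
    norm_num [psi, Ppoly]
  · simp [psi, hy, h2, Ppoly]

lemma hasDerivAt_psi (t : ℝ) : HasDerivAt psi (psid t) t := by
  rcases lt_trichotomy t (-1) with h | h | h
  · have hd : psid t = 0 := by simp [psid, h.le]
    rw [hd]
    have hev : psi =ᶠ[nhds t] fun _ => -(1/2 : ℝ) := by
      filter_upwards [Iio_mem_nhds h] with s hs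
      have hs' : s < -1 := Set.mem_Iio.1 hs
      simp [psi, le_of_lt hs']
    exact (hasDerivAt_const t (-(1/2 : ℝ))).congr_of_eventuallyEq hev
  · subst h
    have hd : psid (-1 : ℝ) = 0 := by norm_num [psid]
    rw [hd]
    have h1 : HasDerivWithinAt psi 0 (Set.Iic (-1 : ℝ)) (-1) := by
      refine ((hasDerivAt_const (-1 : ℝ) (-(1/2 : ℝ))).hasDerivWithinAt).congr ?_ ?_
      · intro y hy
        have hy' : y ≤ -1 := Set.mem_Iic.1 hy
        simp [psi, hy']
      · simp [psi]
    have h2 : HasDerivWithinAt psi 0 (Set.Icc (-1 : ℝ) 0) (-1) := by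
      have := (hasDerivAt_Ppoly (-1)).hasDerivWithinAt (s := Set.Icc (-1 : ℝ) 0)
      have h0 : (3*((-1:ℝ)+1)^2 - 2*((-1:ℝ)+1)^3) = 0 := by norm_num
      rw [h0] at this
      refine this.congr ?_ ?_
      · intro y hy; exact psi_eq_Ppoly_on hy.1 hy.2
      · exact psi_eq_Ppoly_on le_rfl (by norm_num)
    have h12 := h1.union h2
    rw [Set.Iic_union_Icc_eq_Iic (by norm_num : (-1:ℝ) ≤ 0)] at h12
    exact h12.hasDerivAt (Iic_mem_nhds (by norm_num))
  · rcases lt_trichotomy t 0 with h0 | h0 | h0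
    · have hd : psid t = 3*(t+1)^2 - 2*(t+1)^3 := by
        simp [psid, not_le.2 h, h0.le]
      rw [hd]
      have hev : psi =ᶠ[nhds t] Ppoly := by
        filter_upwards [Ioo_mem_nhds h h0] with s hs
        exact psi_eq_Ppoly_on hs.1.le hs.2.le
      exact (hasDerivAt_Ppoly t).congr_of_eventuallyEq hev
    · subst h0
      have hd : psid (0 : ℝ) = 1 := by norm_num [psid]
      rw [hd]
      have h1 : HasDerivWithinAt psi 1 (Set.Icc (-1 : ℝ) 0) 0 := by
        have := (hasDerivAt_Ppoly 0).hasDerivWithinAt (s := Set.Icc (-1 : ℝ) 0)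
        have h0 : (3*((0:ℝ)+1)^2 - 2*((0:ℝ)+1)^3) = 1 := by norm_num
        rw [h0] at this
        refine this.congr ?_ ?_
        · intro y hy; exact psi_eq_Ppoly_on hy.1 hy.2
        · exact psi_eq_Ppoly_on (by norm_num) le_rfl
      have h2 : HasDerivWithinAt psi 1 (Set.Ici (0 : ℝ)) 0 := by
        refine (hasDerivAt_id (0:ℝ)).hasDerivWithinAt.congr ?_ ?_
        · intro y hy
          rcases eq_or_lt_of_le (Set.mem_Ici.1 hy) with h' | h'
          · rw [← h']; norm_num [psi]
          · simp [psi, not_le.2 h', not_le.2 (by linarith : (-1:ℝ) < y)]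
        · norm_num [psi]
      have h12 := h1.union h2
      rw [Set.Icc_union_Ici_eq_Ici (by norm_num : (-1:ℝ) ≤ 0)] at h12
      exact h12.hasDerivAt (Ici_mem_nhds (by norm_num))
    · have hd : psid t = 1 := by simp [psid, not_le.2 h, not_le.2 h0]
      rw [hd]
      have hev : psi =ᶠ[nhds t] id := by
        filter_upwards [Ioi_mem_nhds h0] with s hs
        have hs' : (0:ℝ) < s := Set.mem_Ioi.1 hs
        simp [psi, not_le.2 hs', not_le.2 (by linarith : (-1:ℝ) < s)]
      exact ((hasDerivAt_id t).congr_of_eventuallyEq hev)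

/-! ### Elementary properties of `psi` and `psid` -/

lemma psi_ge (t : ℝ) : -(1/2 : ℝ) ≤ psi t := by
  unfold psi
  split_ifs with h1 h2
  · norm_num
  · nlinarith [mul_nonneg (mul_nonneg (mul_nonneg (by linarith : (0:ℝ) ≤ t+1)
      (by linarith : (0:ℝ) ≤ t+1)) (by linarith : (0:ℝ) ≤ t+1)) (by linarith : (0:ℝ) ≤ 2-(t+1))]
  · linarith

lemma psi_of_pos {t : ℝ} (ht : 0 < t) : psi t = t := by
  simp [psi, not_le.2 ht, not_le.2 (by linarith : (-1:ℝ) < t)]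

lemma psid_nonneg (t : ℝ) : 0 ≤ psid t := by
  unfold psid
  split_ifs with h1 h2
  · norm_num
  · nlinarith [mul_nonneg (sq_nonneg (t+1)) (by linarith : (0:ℝ) ≤ 1 - 2*t)]
  · norm_num

lemma psid_le_one (t : ℝ) : psid t ≤ 1 := by
  unfold psid
  split_ifs with h1 h2
  · norm_num
  · nlinarith [mul_nonneg (sq_nonneg t) (by linarith : (0:ℝ) ≤ 2*t+3)]
  · norm_num

lemma psid_of_nonneg {t : ℝ} (ht : 0 ≤ t) : psid t = 1 := by
  unfold psid
  split_ifs with h1 h2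
  · linarith
  · have : t = 0 := le_antisymm h2 ht
    subst this; norm_num
  · rfl

lemma psid_neg_mul {t : ℝ} (ht : 0 ≤ t) : psid (-t) * t ≤ 1/2 := by
  unfold psid
  split_ifs with h1 h2
  · linarith
  · have ht1 : t < 1 := by linarith
    nlinarith [sq_nonneg (t - 1/3), sq_nonneg (1-t), mul_nonneg ht (sq_nonneg (1-t)),
      mul_nonneg (mul_nonneg ht ht) ht, sq_nonneg (t*(1-t)),
      mul_nonneg (mul_nonneg ht (sub_nonneg.2 ht1.le)) (sub_nonneg.2 ht1.le)]
  · linarith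

/-- The key per-coordinate inequality. -/
lemma key_ineq {δ : ℝ} (hδ0 : 0 ≤ δ) (t : ℝ) :
    (1 - psid t)*t + δ * (psid (-t) * t) ≤ δ/2 - δ * max (-t) 0 := by
  rcases le_or_gt 0 t with ht | ht
  · have h1 : psid t = 1 := psid_of_nonneg ht
    have h2 : psid (-t) * t ≤ 1/2 := psid_neg_mul ht
    have h3 : max (-t) 0 = 0 := max_eq_right (by linarith)
    rw [h1, h3]
    nlinarith [mul_le_mul_of_nonneg_left h2 hδ0]
  · have h2 : psid (-t) = 1 := psid_of_nonneg (by linarith)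
    have h3 : max (-t) 0 = -t := max_eq_left (by linarith)
    have h4 : psid t ≤ 1 := psid_le_one t
    have h5 : (1 - psid t) * t ≤ 0 :=
      mul_nonpos_of_nonneg_of_nonpos (by linarith) ht.le
    rw [h2, h3]
    nlinarith

/-! ### The inner function and its derivative -/

/-- Per-coordinate summand of the inner function. -/
def phiAux (δ c t : ℝ) : ℝ := δ * psi (-t) / c + psi t / c

lemma hasDerivAt_phiAux (δ c t : ℝ) :
    HasDerivAt (phiAux δ c) ((psid t - δ * psid (-t)) / c) t := by
  have h1 : HasDerivAt (fun s : ℝ => psi (-s)) (-psid (-t)) t := by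
    have := (hasDerivAt_psi (-t)).comp t (hasDerivAt_neg t)
    simpa [Function.comp_def] using this
  have h2 := ((h1.const_mul δ).div_const c).add ((hasDerivAt_psi t).div_const c)
  exact h2.congr_deriv (by ring)

/-- The inner function of the Lyapunov function. -/
def FAux (m : ℕ) (μ : Fin m → ℝ) (δ : ℝ) (y : Fin m → ℝ) : ℝ :=
  δ * Psi m μ (-y) + Psi m μ y + (m : ℝ) / ⨅ i, μ i

lemma FAux_eq (m : ℕ) (μ : Fin m → ℝ) (δ : ℝ) (y : Fin m → ℝ) :
    FAux m μ δ y = (∑ i, phiAux δ (μ i) (y i)) + (m : ℝ) / ⨅ i, μ i := by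
  simp [FAux, Psi, phiAux, Finset.mul_sum, ← Finset.sum_add_distrib, mul_div_assoc]

lemma hasFDerivAt_FAux (m : ℕ) (μ : Fin m → ℝ) (δ : ℝ) (x : Fin m → ℝ) :
    HasFDerivAt (FAux m μ δ)
      (∑ i, ((psid (x i) - δ * psid (-(x i))) / μ i) •
        ContinuousLinearMap.proj (R := ℝ) (φ := fun _ : Fin m => ℝ) i) x := by
  have hterm : ∀ i : Fin m, HasFDerivAt (fun y : Fin m → ℝ => phiAux δ (μ i) (y i))
      (((psid (x i) - δ * psid (-(x i))) / μ i) •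
        ContinuousLinearMap.proj (R := ℝ) (φ := fun _ : Fin m => ℝ) i) x := by
    intro i
    exact (hasDerivAt_phiAux δ (μ i) (x i)).comp_hasFDerivAt x
      (ContinuousLinearMap.proj (R := ℝ) (φ := fun _ : Fin m => ℝ) i).hasFDerivAt
  have hsum := HasFDerivAt.sum (fun i (_ : i ∈ Finset.univ) => hterm i)
  have := hsum.add_const ((m : ℝ) / ⨅ i, μ i)
  refine this.congr_of_eventuallyEq ?_
  filter_upwards with y
  rw [Finset.sum_apply]
  exact FAux_eq m μ δ y

/-- Per-coordinate algebraic rewriting of the drift pairing. -/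
lemma drift_rw (μi γi βm s t ui hi : ℝ) (hμi : μi ≠ 0) :
    (hi / μi) * (-(βm) * μi - μi * (t - s * ui) - s * (γi * ui))
      = hi * (-βm) + (-(hi * t)) + s * (ui * (hi * (1 - γi / μi))) := by
  field_simp
  ring

set_option maxHeartbeats 1600000 in
/-- Lemma 1, inequality on `K₊`: for `β > 0`, admissible `δ`, `p > 1`, `x ∈ K₊`,
`u ∈ Δ`: `⟨b(x,u), ∇V_p(x)⟩ ≤ -p (β/m - δβ - δm/2 + δ‖x⁻‖₁) V_{p-1}(x)`. -/
theorem stmt_6 (m : ℕ) (hm : 1 ≤ m) (μ γ : Fin m → ℝ)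
    (hμ : ∀ i, 0 < μ i) (hγ : ∀ i, 0 ≤ γ i)
    (β : ℝ) (hβ : 0 < β)
    (δ : ℝ) (hδ0 : 0 < δ) (hδ1 : δ ≤ 1)
    (hδγ : max ((⨆ i, γ i / μ i) - 1) 0 * δ ≤ 1)
    (p : ℝ) (hp : 1 < p)
    (x : Fin m → ℝ) (hx : 0 < ∑ i, x i)
    (u : Fin m → ℝ) (hu0 : ∀ i, 0 ≤ u i) (hu1 : ∑ i, u i = 1) :
    fderiv ℝ (Vp m μ δ p) x (drift m μ γ β x u) ≤
      -(p * (β / (m : ℝ) - δ * β - δ * (m : ℝ) / 2 + δ * ∑ i, max (-(x i)) 0)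
        * Vp m μ δ (p - 1) x) := by
  haveI : Nonempty (Fin m) := ⟨⟨0, hm⟩⟩
  have hm0 : (0:ℝ) < (m:ℝ) := by exact_mod_cast hm
  -- positivity of the infimum
  obtain ⟨j0, hj0⟩ := Finite.exists_min μ
  have hinf_le : ∀ i, (⨅ k, μ k) ≤ μ i := fun i => ciInf_le (Finite.bddBelow_range μ) i
  have hinf_pos : 0 < ⨅ k, μ k := lt_of_lt_of_le (hμ j0) (le_ciInf hj0)
  -- a coordinate with positive value
  have hexj : ∃ j, 0 < x j := by
    by_contra hcon
    push_neg at hcon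
    exact absurd (Finset.sum_nonpos fun i _ => hcon i) (not_le.2 hx)
  obtain ⟨j, hj⟩ := hexj
  -- positivity of the inner function
  have hlow : ∀ i, -(1:ℝ) / (⨅ k, μ k) ≤ phiAux δ (μ i) (x i) := by
    intro i
    have h1 : -(1:ℝ) ≤ δ * psi (-(x i)) + psi (x i) := by
      nlinarith [psi_ge (-(x i)), psi_ge (x i)]
    have h2 : phiAux δ (μ i) (x i) = (δ * psi (-(x i)) + psi (x i)) / μ i := by
      unfold phiAux; ring
    rw [h2]
    have h3 : -(1:ℝ) / μ i ≤ (δ * psi (-(x i)) + psi (x i)) / μ i :=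
      (div_le_div_iff_of_pos_right (hμ i)).2 h1
    refine le_trans ?_ h3
    rw [neg_div, neg_div, neg_le_neg_iff]
    exact one_div_le_one_div_of_le hinf_pos (hinf_le i)
  have hstrict : -(1:ℝ) / (⨅ k, μ k) < phiAux δ (μ j) (x j) := by
    have h1 : -(1:ℝ)/2 < δ * psi (-(x j)) + psi (x j) := by
      rw [psi_of_pos hj]
      nlinarith [psi_ge (-(x j))]
    have h2 : phiAux δ (μ j) (x j) = (δ * psi (-(x j)) + psi (x j)) / μ j := by
      unfold phiAux; ring
    rw [h2]
    have h3 : (-(1:ℝ)/2) / μ j < (δ * psi (-(x j)) + psi (x j)) / μ j :=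
      (div_lt_div_iff_of_pos_right (hμ j)).2 h1
    refine lt_of_lt_of_le ?_ h3.le
    have h4 : (1:ℝ) / (2 * μ j) < 1 / μ j := by
      apply one_div_lt_one_div_of_lt (hμ j)
      linarith [hμ j]
    have h5 : (1:ℝ) / μ j ≤ 1 / (⨅ k, μ k) :=
      one_div_le_one_div_of_le hinf_pos (hinf_le j)
    have : (-(1:ℝ)/2) / μ j = -(1 / (2 * μ j)) := by
      field_simp
    rw [this, neg_div, neg_lt_neg_iff]
    linarith
  have hFpos : 0 < FAux m μ δ x := by
    rw [FAux_eq]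
    have hsum : ∑ i, (-(1:ℝ) / (⨅ k, μ k)) < ∑ i, phiAux δ (μ i) (x i) :=
      Finset.sum_lt_sum (fun i _ => hlow i) ⟨j, Finset.mem_univ j, hstrict⟩
    have hconst : ∑ _i : Fin m, (-(1:ℝ) / (⨅ k, μ k)) = -((m:ℝ) / (⨅ k, μ k)) := by
      rw [Finset.sum_const, Finset.card_univ, Fintype.card_fin, nsmul_eq_mul]
      ring
    rw [hconst] at hsum
    linarith
  -- derivative of Vp
  have hFder := hasFDerivAt_FAux m μ δ x
  have hrpow := (Real.hasDerivAt_rpow_const (x := FAux m μ δ x) (p := p)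
    (Or.inl (ne_of_gt hFpos))).comp_hasFDerivAt x hFder
  have hV : HasFDerivAt (Vp m μ δ p)
      ((p * (FAux m μ δ x) ^ (p-1)) •
        ∑ i, ((psid (x i) - δ * psid (-(x i))) / μ i) •
          ContinuousLinearMap.proj (R := ℝ) (φ := fun _ : Fin m => ℝ) i) x := hrpow
  have hfd : fderiv ℝ (Vp m μ δ p) x (drift m μ γ β x u)
      = (p * (FAux m μ δ x) ^ (p-1)) *
        ∑ i, ((psid (x i) - δ * psid (-(x i))) / μ i) * drift m μ γ β x u i := by
    rw [hV.fderiv]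
    simp [ContinuousLinearMap.sum_apply, smul_eq_mul]
  rw [hfd]
  have hVp1 : Vp m μ δ (p-1) x = (FAux m μ δ x) ^ (p-1) := rfl
  rw [hVp1]
  -- abbreviations
  set s : ℝ := max (∑ i, x i) 0 with hsdef
  have hs : s = ∑ i, x i := max_eq_left hx.le
  have hs0 : 0 ≤ s := le_max_right _ _
  set h : Fin m → ℝ := fun i => psid (x i) - δ * psid (-(x i)) with hhdef
  -- rewrite the sum
  have hS : ∑ i, ((psid (x i) - δ * psid (-(x i))) / μ i) * drift m μ γ β x u i
      = (∑ i, h i) * (-(β / (m:ℝ))) + (∑ i, (-(h i * x i)))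
        + s * (∑ i, u i * (h i * (1 - γ i / μ i))) := by
    have : ∀ i, ((psid (x i) - δ * psid (-(x i))) / μ i) * drift m μ γ β x u i
        = h i * (-(β / (m:ℝ))) + (-(h i * x i)) + s * (u i * (h i * (1 - γ i / μ i))) := by
      intro i
      exact drift_rw (μ i) (γ i) (β / (m:ℝ)) s (x i) (u i) (h i) (hμ i).ne'
    rw [Finset.sum_congr rfl (fun i _ => this i)]
    rw [Finset.sum_add_distrib, Finset.sum_add_distrib, ← Finset.sum_mul, ← Finset.mul_sum]
  rw [hS]
  clear_value s
  -- bounds on h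
  have hb1 : ∀ i, h i ≤ 1 := by
    intro i
    have := psid_le_one (x i)
    have := psid_nonneg (-(x i))
    simp only [hhdef]
    nlinarith
  have hb2 : ∀ i, -δ ≤ h i := by
    intro i
    have := psid_nonneg (x i)
    have := psid_le_one (-(x i))
    simp only [hhdef]
    nlinarith
  -- bound (1): sum of h
  have hH : 1 - (m:ℝ) * δ ≤ ∑ i, h i := by
    have h1 : ∀ i, 0 ≤ h i + δ := fun i => by linarith [hb2 i]
    have h2 : (1:ℝ) ≤ h j + δ := by
      have hb := psid_le_one (-(x j))
      simp only [hhdef, psid_of_nonneg hj.le]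
      nlinarith
    have h3 : h j + δ ≤ ∑ i, (h i + δ) :=
      Finset.single_le_sum (f := fun i => h i + δ) (fun i _ => h1 i) (Finset.mem_univ j)
    have h4 : ∑ i, (h i + δ) = (∑ i, h i) + (m:ℝ) * δ := by
      rw [Finset.sum_add_distrib, Finset.sum_const, Finset.card_univ, Fintype.card_fin,
        nsmul_eq_mul]
    linarith
  -- bound (2): B + s
  have hB : (∑ i, (-(h i * x i))) + s ≤ δ * (m:ℝ) / 2 - δ * ∑ i, max (-(x i)) 0 := by
    have hper : ∀ i, -(h i * x i) + x i ≤ δ/2 - δ * max (-(x i)) 0 := by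
      intro i
      have := key_ineq hδ0.le (x i)
      simp only [hhdef]
      nlinarith [this]
    have hsum := Finset.sum_le_sum (fun i (_ : i ∈ Finset.univ) => hper i)
    rw [Finset.sum_add_distrib] at hsum
    have hrhs : ∑ i, (δ/2 - δ * max (-(x i)) 0)
        = (m:ℝ) * (δ/2) - δ * ∑ i, max (-(x i)) 0 := by
      rw [Finset.sum_sub_distrib, Finset.sum_const, Finset.card_univ, Fintype.card_fin,
        nsmul_eq_mul, ← Finset.mul_sum]
    rw [hrhs] at hsum
    rw [hs]
    linarith
  clear_value h
  -- bound (3): the u-term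
  have hT : ∑ i, u i * (h i * (1 - γ i / μ i)) ≤ 1 := by
    have hper : ∀ i, h i * (1 - γ i / μ i) ≤ 1 := by
      intro i
      rcases le_or_gt (γ i) (μ i) with hle | hlt
      · have hr0 : 0 ≤ 1 - γ i / μ i := by
          rw [sub_nonneg]
          exact (div_le_one (hμ i)).2 hle
        have hr1 : 1 - γ i / μ i ≤ 1 := by
          have : 0 ≤ γ i / μ i := div_nonneg (hγ i) (hμ i).le
          linarith
        rcases le_or_gt 0 (h i) with h0 | h0
        · calc h i * (1 - γ i / μ i) ≤ 1 * 1 :=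
              mul_le_mul (hb1 i) hr1 hr0 zero_le_one
            _ = 1 := mul_one 1
        · have : h i * (1 - γ i / μ i) ≤ 0 :=
            mul_nonpos_of_nonpos_of_nonneg h0.le hr0
          linarith
      · have hr : 1 - γ i / μ i < 0 := by
          rw [sub_neg]
          exact (one_lt_div (hμ i)).2 hlt
        calc h i * (1 - γ i / μ i) ≤ (-δ) * (1 - γ i / μ i) :=
              mul_le_mul_of_nonpos_right (hb2 i) hr.le
          _ = δ * (γ i / μ i - 1) := by ring
          _ ≤ δ * max ((⨆ k, γ k / μ k) - 1) 0 := by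
              apply mul_le_mul_of_nonneg_left _ hδ0.le
              refine le_trans ?_ (le_max_left _ _)
              have : γ i / μ i ≤ ⨆ k, γ k / μ k :=
                le_ciSup (f := fun k => γ k / μ k) (Set.Finite.bddAbove (Set.finite_range _)) i
              linarith
          _ ≤ 1 := by rw [mul_comm]; exact hδγ
    calc ∑ i, u i * (h i * (1 - γ i / μ i)) ≤ ∑ i, u i * 1 :=
          Finset.sum_le_sum (fun i _ => mul_le_mul_of_nonneg_left (hper i) (hu0 i))
      _ = 1 := by simp [hu1]
  -- assemble the bound on S
  have hSle : (∑ i, h i) * (-(β / (m:ℝ))) + (∑ i, (-(h i * x i)))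
        + s * (∑ i, u i * (h i * (1 - γ i / μ i)))
      ≤ -(β / (m:ℝ) - δ * β - δ * (m:ℝ) / 2 + δ * ∑ i, max (-(x i)) 0) := by
    have e1 : (∑ i, h i) * (-(β / (m:ℝ))) ≤ (1 - (m:ℝ) * δ) * (-(β / (m:ℝ))) := by
      apply mul_le_mul_of_nonpos_right hH
      have : 0 ≤ β / (m:ℝ) := by positivity
      linarith
    have e3 : s * (∑ i, u i * (h i * (1 - γ i / μ i))) ≤ s * 1 :=
      mul_le_mul_of_nonneg_left hT hs0
    have e4 : (1 - (m:ℝ) * δ) * (-(β / (m:ℝ))) = -(β / (m:ℝ)) + δ * β := by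
      field_simp
      ring
    have e5 : s * 1 = s := mul_one s
    rw [e5] at e3
    linarith [e1, e3, hB]
  have hA : 0 < (FAux m μ δ x) ^ (p-1) := Real.rpow_pos_of_pos hFpos _
  have hpA : 0 ≤ p * (FAux m μ δ x) ^ (p-1) := by positivity
  calc (p * (FAux m μ δ x) ^ (p-1)) *
        ((∑ i, h i) * (-(β / (m:ℝ))) + (∑ i, (-(h i * x i)))
          + s * (∑ i, u i * (h i * (1 - γ i / μ i))))
      ≤ (p * (FAux m μ δ x) ^ (p-1)) *
        (-(β / (m:ℝ) - δ * β - δ * (m:ℝ) / 2 + δ * ∑ i, max (-(x i)) 0)) :=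
        mul_le_mul_of_nonneg_left hSle hpA
    _ = -(p * (β / (m:ℝ) - δ * β - δ * (m:ℝ) / 2 + δ * ∑ i, max (-(x i)) 0)
          * (FAux m μ δ x) ^ (p-1)) := by ring

end
end

section
/- For every x ∈ ℝ^m and every t ≥ 1, the integrals defining I_α(F - F_{1,t})(x) converge absolutely and I_α(F - F_{1,t})(x) ≥ 0. -/
open scoped BigOperators
open MeasureTheory

noncomputable section

/-- `χ̆(t) = 1 + ψ(t)`. -/
def chibreve (t : ℝ) : ℝ := 1 + psi t

/-- `χ_R(t) = R + χ(t-R)` where `χ(t) = -χ̆(-t)`; explicitly `χ_R(t) = R - χ̆(R-t)`. -/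
def chiR (R t : ℝ) : ℝ := R - chibreve (R - t)

/-- `F(x) = χ̆(⟨e, M⁻¹x⟩) = χ̆(∑ i, x_i/μ_i)`. -/
def Ffun (m : ℕ) (μ : Fin m → ℝ) (x : Fin m → ℝ) : ℝ := chibreve (∑ i, x i / μ i)

/-- The difference `F - F_{1,t}` where `F_{1,t} = χ_t ∘ F`. -/
def Fdiff (m : ℕ) (μ : Fin m → ℝ) (t : ℝ) (x : Fin m → ℝ) : ℝ :=
  Ffun m μ x - chiR t (Ffun m μ x)

/-- The anisotropic `α`-stable non-local operator
`I_α f(x) = ∑ i, ξ_i ∫_{ℝ∖{0}} (f(x + y e_i) - f(x) - y ∂_i f(x)) |y|^{-(1+α)} dy`. -/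
def Ialpha (m : ℕ) (α : ℝ) (ξ : Fin m → ℝ) (f : (Fin m → ℝ) → ℝ)
    (x : Fin m → ℝ) : ℝ :=
  ∑ i, ξ i * ∫ y : ℝ,
    (f (x + Pi.single i y) - f x - y * fderiv ℝ f x (Pi.single i 1)) / |y| ^ (1 + α)

/-- Absolute convergence of the integrals defining `I_α f(x)`. -/
def IalphaConv (m : ℕ) (α : ℝ) (f : (Fin m → ℝ) → ℝ) (x : Fin m → ℝ) : Prop :=
  ∀ i : Fin m, Integrable (fun y : ℝ =>
    (f (x + Pi.single i y) - f x - y * fderiv ℝ f x (Pi.single i 1)) / |y| ^ (1 + α))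

/-- derivative of the cubic piece -/
def p0 (v : ℝ) : ℝ := 3*(v+1)^2 - 2*(v+1)^3

/-- clamp to [-1,0] -/
def clmp (v : ℝ) : ℝ := max (-1) (min v 0)

def pfun (v : ℝ) : ℝ := p0 (clmp v)

lemma clmp_mem (v : ℝ) : clmp v ∈ Set.Icc (-1:ℝ) 0 := by
  constructor
  · exact le_max_left _ _
  · exact max_le (by norm_num) (min_le_right _ _)

lemma clmp_of_le (v : ℝ) (h : v ≤ -1) : clmp v = -1 := by
  unfold clmp
  rw [min_eq_left (by linarith), max_eq_left h]

lemma clmp_of_ge (v : ℝ) (h : 0 ≤ v) : clmp v = 0 := by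
  unfold clmp
  rw [min_eq_right h, max_eq_right (by norm_num)]

lemma clmp_of_mem (v : ℝ) (h1 : -1 ≤ v) (h2 : v ≤ 0) : clmp v = v := by
  unfold clmp
  rw [min_eq_left h2, max_eq_right h1]

lemma clmp_mono : Monotone clmp :=
  fun _ _ h => max_le_max le_rfl (min_le_min (by exact h) le_rfl)

lemma clmp_lip (a b : ℝ) : |clmp a - clmp b| ≤ |a - b| := by
  unfold clmp
  have h1 := abs_max_sub_max_le_max (-1 : ℝ) (min a 0) (-1) (min b 0)
  have h2 := abs_min_sub_min_le_max a 0 b 0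
  have h1' : |max (-1:ℝ) (min a 0) - max (-1) (min b 0)| ≤ |min a 0 - min b 0| := by
    simpa using h1
  have h2' : |min a 0 - min b 0| ≤ |a - b| := by simpa using h2
  exact h1'.trans h2' 

lemma hasDerivAt_cubic (v : ℝ) :
    HasDerivAt (fun w : ℝ => (w+1)^3 - (1/2)*(w+1)^4 - 1/2) (p0 v) v := by
  have h1 : HasDerivAt (fun w : ℝ => w + 1) 1 v := (hasDerivAt_id v).add_const 1
  have h3 := h1.pow 3
  have h4 := h1.pow 4
  have := (h3.sub (h4.const_mul (1/2))).sub_const (1/2)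
  refine this.congr_deriv ?_
  unfold p0
  push_cast
  ring

lemma hasDerivAt_psi_s11 (v : ℝ) : HasDerivAt psi (pfun v) v := by
  rcases lt_trichotomy v (-1) with h | h | h
  · have : pfun v = 0 := by rw [pfun, clmp_of_le _ h.le]; unfold p0; norm_num
    rw [this]
    apply (hasDerivAt_const v (-(1/2) : ℝ)).congr_of_eventuallyEq
    filter_upwards [Iio_mem_nhds h] with w hw
    simp only [psi, if_pos (Set.mem_Iio.1 hw).le]
  · subst h
    have hval : pfun (-1) = 0 := by rw [pfun, clmp_of_le _ le_rfl]; unfold p0; norm_num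
    rw [hval]
    have hleft : HasDerivWithinAt psi 0 (Set.Iic (-1)) (-1) := by
      apply ((hasDerivAt_const (-1 : ℝ) (-(1/2) : ℝ)).hasDerivWithinAt).congr
      · intro w hw; simp only [psi, if_pos (Set.mem_Iic.1 hw)]
      · simp [psi]
    have hright : HasDerivWithinAt psi 0 (Set.Icc (-1) 0) (-1) := by
      have hc := (hasDerivAt_cubic (-1)).hasDerivWithinAt (s := Set.Icc (-1) 0)
      have hp0 : p0 (-1) = 0 := by unfold p0; norm_num
      rw [hp0] at hc
      apply hc.congr
      · intro w hw
        rcases eq_or_lt_of_le hw.1 with h' | h'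
        · simp only [psi, ← h']; norm_num
        · simp only [psi, if_neg (by linarith : ¬ w ≤ -1), if_pos hw.2]
      · norm_num [psi]
    have := hleft.union hright
    rw [Set.Iic_union_Icc_eq_Iic (by norm_num : (-1:ℝ) ≤ 0)] at this
    exact this.hasDerivAt (Iic_mem_nhds (by norm_num))
  · rcases lt_trichotomy v 0 with h0 | h0 | h0
    · have : pfun v = p0 v := by rw [pfun, clmp_of_mem v h.le h0.le]
      rw [this]
      apply (hasDerivAt_cubic v).congr_of_eventuallyEq
      filter_upwards [Ioo_mem_nhds h h0] with w hw
      simp only [psi, if_neg (by linarith [hw.1] : ¬ w ≤ -1), if_pos hw.2.le]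
    · subst h0
      have hval : pfun 0 = 1 := by rw [pfun, clmp_of_ge _ le_rfl]; unfold p0; norm_num
      rw [hval]
      have hleft : HasDerivWithinAt psi 1 (Set.Icc (-1) 0) 0 := by
        have hc := (hasDerivAt_cubic 0).hasDerivWithinAt (s := Set.Icc (-1) 0)
        have hp0 : p0 0 = 1 := by unfold p0; norm_num
        rw [hp0] at hc
        apply hc.congr
        · intro w hw
          rcases eq_or_lt_of_le hw.1 with h' | h'
          · simp only [psi, ← h']; norm_num
          · simp only [psi, if_neg (by linarith : ¬ w ≤ -1), if_pos hw.2]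
        · simp [psi]
      have hright : HasDerivWithinAt psi 1 (Set.Ici 0) 0 := by
        apply (hasDerivAt_id (0:ℝ)).hasDerivWithinAt.congr
        · intro w hw
          rcases eq_or_lt_of_le (Set.mem_Ici.1 hw) with h' | h'
          · subst h'; norm_num [psi]
          · simp only [psi, if_neg (by linarith : ¬ w ≤ -1), if_neg (by linarith : ¬ w ≤ 0), id]
        · norm_num [psi]
      have := hleft.union hright
      rw [Set.Icc_union_Ici_eq_Ici (by norm_num : (-1:ℝ) ≤ 0)] at this
      exact this.hasDerivAt (Ici_mem_nhds (by norm_num))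
    · have : pfun v = 1 := by rw [pfun, clmp_of_ge _ h0.le]; unfold p0; norm_num
      rw [this]
      apply (hasDerivAt_id v).congr_of_eventuallyEq
      filter_upwards [Ioi_mem_nhds h0] with w hw
      simp only [psi, if_neg (by linarith [Set.mem_Ioi.1 hw] : ¬ w ≤ -1),
        if_neg (by linarith [Set.mem_Ioi.1 hw] : ¬ w ≤ 0)]
      rfl

section part2
variable {a b : ℝ}

lemma p0_mono_on : ∀ a ∈ Set.Icc (-1:ℝ) 0, ∀ b ∈ Set.Icc (-1:ℝ) 0, a ≤ b → p0 a ≤ p0 b := by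
  intro a ha b hb hab
  unfold p0
  nlinarith [sq_nonneg (a+b+2), mul_nonneg (sub_nonneg.2 hab) (mul_nonneg (by linarith [ha.1] : (0:ℝ) ≤ a + 1) (by linarith [hb.2] : (0:ℝ) ≤ -b)), mul_nonneg (sub_nonneg.2 hab) (mul_nonneg (by linarith [hb.1] : (0:ℝ) ≤ b + 1) (by linarith [hb.2] : (0:ℝ) ≤ -b)), mul_nonneg (sub_nonneg.2 hab) (mul_nonneg (by linarith [ha.1] : (0:ℝ) ≤ a + 1) (by linarith [ha.2] : (0:ℝ) ≤ -a))]

lemma p0_lip_on : ∀ a ∈ Set.Icc (-1:ℝ) 0, ∀ b ∈ Set.Icc (-1:ℝ) 0, a ≤ b →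
    p0 b - p0 a ≤ (3/2) * (b - a) := by
  intro a ha b hb hab
  unfold p0
  nlinarith [sq_nonneg (a + b + 1), sq_nonneg (a - b), mul_nonneg (sub_nonneg.2 hab) (sq_nonneg (a+b+1))]

lemma pfun_nonneg (v : ℝ) : 0 ≤ pfun v := by
  have h := clmp_mem v
  unfold pfun p0
  nlinarith [h.1, h.2, sq_nonneg (clmp v + 1)]

lemma pfun_le_one (v : ℝ) : pfun v ≤ 1 := by
  have h := clmp_mem v
  unfold pfun p0
  nlinarith [h.1, h.2, mul_nonneg (mul_nonneg (by linarith [h.2] : (0:ℝ) ≤ -clmp v) (by linarith [h.2] : (0:ℝ) ≤ -clmp v)) (by linarith [h.1] : (0:ℝ) ≤ 2*(clmp v)+3)]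

lemma pfun_mono : Monotone pfun := fun a b h =>
  p0_mono_on _ (clmp_mem a) _ (clmp_mem b) (clmp_mono h)

lemma pfun_lip (a b : ℝ) : |pfun a - pfun b| ≤ (3/2) * |a - b| := by
  have key : ∀ u v : ℝ, u ≤ v → |pfun v - pfun u| ≤ (3/2) * |v - u| := by
    intro u v huv
    have h1 : pfun u ≤ pfun v := pfun_mono huv
    have h2 : pfun v - pfun u ≤ (3/2) * (clmp v - clmp u) :=
      p0_lip_on _ (clmp_mem u) _ (clmp_mem v) (clmp_mono huv)
    have h3 : |clmp v - clmp u| ≤ |v - u| := clmp_lip v u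
    have h4 : clmp v - clmp u ≤ |v - u| := (le_abs_self _).trans h3
    rw [abs_of_nonneg (by linarith : (0:ℝ) ≤ v - u)] at h4
    rw [abs_of_nonneg (by linarith), abs_of_nonneg (by linarith)]
    linarith
  rcases le_total a b with h | h
  · rw [abs_sub_comm, abs_sub_comm a b]; exact key a b h
  · exact key b a h

/-- tangent line bounds from MVT for a function with monotone derivative -/
lemma tangent_line {f D : ℝ → ℝ} (hf : ∀ v, HasDerivAt f (D v) v) (hD : Monotone D)
    (a b : ℝ) : D a * (b - a) ≤ f b - f a ∧ f b - f a ≤ D b * (b - a) := by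
  rcases lt_trichotomy a b with h | h | h
  · obtain ⟨c, hc, hc'⟩ := exists_hasDerivAt_eq_slope f D h
      (fun v _ => (hf v).continuousAt.continuousWithinAt) (fun v _ => hf v)
    have hfb : f b - f a = D c * (b - a) := by
      rw [hc', div_mul_cancel₀ _ (sub_ne_zero.2 h.ne')]
    constructor
    · rw [hfb]
      exact mul_le_mul_of_nonneg_right (hD hc.1.le) (by linarith)
    · rw [hfb]
      exact mul_le_mul_of_nonneg_right (hD hc.2.le) (by linarith)
  · subst h; simp
  · obtain ⟨c, hc, hc'⟩ := exists_hasDerivAt_eq_slope f D h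
      (fun v _ => (hf v).continuousAt.continuousWithinAt) (fun v _ => hf v)
    have hfb : f a - f b = D c * (a - b) := by
      rw [hc', div_mul_cancel₀ _ (sub_ne_zero.2 h.ne')]
    have h1 : D b ≤ D c := hD hc.1.le
    have h2 : D c ≤ D a := hD hc.2.le
    constructor
    · nlinarith
    · nlinarith

lemma lipschitz_of_deriv {f D : ℝ → ℝ} (hf : ∀ v, HasDerivAt f (D v) v) (hD : Monotone D)
    (h0 : ∀ v, 0 ≤ D v) (h1 : ∀ v, D v ≤ 1) (a b : ℝ) : |f b - f a| ≤ |b - a| := by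
  obtain ⟨hl, hr⟩ := tangent_line hf hD a b
  rw [abs_le]
  constructor
  · calc -|b - a| ≤ D a * (b - a) := by
          rcases le_total 0 (b - a) with h | h
          · calc -|b-a| ≤ 0 := neg_nonpos.2 (abs_nonneg _)
              _ ≤ D a * (b - a) := mul_nonneg (h0 a) h
          · rw [abs_of_nonpos h]
            nlinarith [h0 a, h1 a]
      _ ≤ f b - f a := hl
  · calc f b - f a ≤ D b * (b - a) := hr
      _ ≤ |b - a| := by
          rcases le_total 0 (b - a) with h | h
          · rw [abs_of_nonneg h]; nlinarith [h0 b, h1 b]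
          · calc D b * (b-a) ≤ 0 := mul_nonpos_of_nonneg_of_nonpos (h0 b) h
              _ ≤ |b - a| := abs_nonneg _

lemma psi_mono : Monotone psi := by
  apply monotone_of_deriv_nonneg
  · exact fun v => (hasDerivAt_psi_s11 v).differentiableAt
  · intro v; rw [(hasDerivAt_psi_s11 v).deriv]; exact pfun_nonneg v

lemma psi_lip (a b : ℝ) : |psi b - psi a| ≤ |b - a| :=
  lipschitz_of_deriv hasDerivAt_psi_s11 pfun_mono pfun_nonneg pfun_le_one a b

end part2
def Gfun (t u : ℝ) : ℝ := chibreve u - t + chibreve (t - chibreve u)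

def Dfun (t u : ℝ) : ℝ := pfun u * (1 - pfun (t - 1 - psi u))

lemma hasDerivAt_chibreve (v : ℝ) : HasDerivAt chibreve (pfun v) v :=
  (hasDerivAt_psi_s11 v).const_add 1

lemma hasDerivAt_G (t u : ℝ) : HasDerivAt (Gfun t) (Dfun t u) u := by
  have h1 : HasDerivAt (fun u => t - chibreve u) (-(pfun u)) u :=
    (hasDerivAt_chibreve u).const_sub t
  have h2 : HasDerivAt (fun u => chibreve (t - chibreve u))
      (pfun (t - chibreve u) * (-(pfun u))) u :=
    (hasDerivAt_chibreve (t - chibreve u)).comp (h := fun u => t - chibreve u) u h1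
  have h3 := ((hasDerivAt_chibreve u).sub_const t).add h2
  refine h3.congr_deriv ?_
  unfold Dfun chibreve
  ring_nf

lemma Dfun_nonneg (t u : ℝ) : 0 ≤ Dfun t u :=
  mul_nonneg (pfun_nonneg u) (by linarith [pfun_le_one (t - 1 - psi u)])

lemma Dfun_le_one (t u : ℝ) : Dfun t u ≤ 1 := by
  have h1 := pfun_le_one u
  have h2 := pfun_nonneg u
  have h3 := pfun_nonneg (t - 1 - psi u)
  have h4 := pfun_le_one (t - 1 - psi u)
  unfold Dfun
  nlinarith

lemma Dfun_mono (t : ℝ) : Monotone (Dfun t) := by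
  intro u w huw
  have ha1 : pfun u ≤ pfun w := pfun_mono huw
  have hb1 : pfun (t - 1 - psi w) ≤ pfun (t - 1 - psi u) :=
    pfun_mono (by linarith [psi_mono huw])
  have h2 := pfun_nonneg u
  have h3 := pfun_nonneg (t - 1 - psi w)
  have h4 := pfun_le_one (t - 1 - psi w)
  unfold Dfun
  nlinarith

lemma Dfun_lip (t a b : ℝ) : |Dfun t b - Dfun t a| ≤ 3 * |b - a| := by
  have key : Dfun t b - Dfun t a
      = (pfun b - pfun a) * (1 - pfun (t - 1 - psi b))
        + pfun a * (pfun (t - 1 - psi a) - pfun (t - 1 - psi b)) := by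
    unfold Dfun; ring
  rw [key]
  have e1 : |(pfun b - pfun a) * (1 - pfun (t - 1 - psi b))| ≤ (3/2) * |b - a| := by
    rw [abs_mul]
    calc |pfun b - pfun a| * |1 - pfun (t - 1 - psi b)|
        ≤ ((3/2) * |b - a|) * 1 := by
          apply mul_le_mul (pfun_lip b a) _ (abs_nonneg _) (by positivity)
          rw [abs_le]
          constructor <;> [linarith [pfun_le_one (t - 1 - psi b)]; linarith [pfun_nonneg (t - 1 - psi b)]]
      _ = (3/2) * |b - a| := by ring
  have e2 : |pfun a * (pfun (t - 1 - psi a) - pfun (t - 1 - psi b))| ≤ (3/2) * |b - a| := by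
    rw [abs_mul]
    calc |pfun a| * |pfun (t - 1 - psi a) - pfun (t - 1 - psi b)|
        ≤ 1 * ((3/2) * |(t - 1 - psi a) - (t - 1 - psi b)|) := by
          apply mul_le_mul _ (pfun_lip _ _) (abs_nonneg _) (by norm_num)
          rw [abs_le]
          constructor <;> [linarith [pfun_nonneg a]; exact pfun_le_one a]
      _ = (3/2) * |psi b - psi a| := by rw [show (t - 1 - psi a) - (t - 1 - psi b) = psi b - psi a by ring]; ring
      _ ≤ (3/2) * |b - a| := by linarith [psi_lip a b]
  calc |(pfun b - pfun a) * (1 - pfun (t - 1 - psi b))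
        + pfun a * (pfun (t - 1 - psi a) - pfun (t - 1 - psi b))|
      ≤ |(pfun b - pfun a) * (1 - pfun (t - 1 - psi b))|
        + |pfun a * (pfun (t - 1 - psi a) - pfun (t - 1 - psi b))| := abs_add_le _ _
    _ ≤ 3 * |b - a| := by linarith

lemma G_tangent (t a b : ℝ) :
    Dfun t a * (b - a) ≤ Gfun t b - Gfun t a ∧ Gfun t b - Gfun t a ≤ Dfun t b * (b - a) :=
  tangent_line (hasDerivAt_G t) (Dfun_mono t) a b

lemma G_lip (t a b : ℝ) : |Gfun t b - Gfun t a| ≤ |b - a| :=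
  lipschitz_of_deriv (hasDerivAt_G t) (Dfun_mono t) (Dfun_nonneg t) (Dfun_le_one t) a b
lemma base_measurable (α : ℝ) :
    Measurable (fun y : ℝ => min (y^2) |y| / |y| ^ (1+α)) := by
  fun_prop

lemma base_Ioi {α : ℝ} (hα1 : 1 < α) (hα2 : α < 2) :
    IntegrableOn (fun y : ℝ => min (y^2) |y| / |y| ^ (1+α)) (Set.Ioi 0) := by
  rw [← Set.Ioo_union_Ici_eq_Ioi (zero_lt_one : (0:ℝ) < 1), integrableOn_union]
  constructor
  · apply Integrable.mono' ((intervalIntegral.integrableOn_Ioo_rpow_iff zero_lt_one).2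
      (by linarith : (-1:ℝ) < 1 - α))
    · exact (base_measurable α).aestronglyMeasurable.restrict
    · filter_upwards [ae_restrict_mem measurableSet_Ioo] with y hy
      have hy0 : 0 < y := hy.1
      have habs : |y| = y := abs_of_pos hy0
      have hden : (0:ℝ) < |y| ^ (1+α) := Real.rpow_pos_of_pos (by rw [habs]; exact hy0) _
      rw [Real.norm_eq_abs, abs_of_nonneg (div_nonneg (le_min (sq_nonneg _) (abs_nonneg _)) hden.le)]
      calc min (y^2) |y| / |y| ^ (1+α) ≤ y^2 / |y| ^ (1+α) :=
            div_le_div_of_nonneg_right (min_le_left _ _) hden.le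
        _ = y ^ (1 - α) := by
            rw [habs, ← Real.rpow_natCast y 2, ← Real.rpow_sub hy0]
            congr 1
            push_cast
            ring
  · rw [integrableOn_Ici_iff_integrableOn_Ioi]
    apply Integrable.mono' (integrableOn_Ioi_rpow_of_lt (by linarith : -α < -1) zero_lt_one)
    · exact (base_measurable α).aestronglyMeasurable.restrict
    · filter_upwards [ae_restrict_mem measurableSet_Ioi] with y hy
      have hy0 : (0:ℝ) < y := lt_trans zero_lt_one hy
      have habs : |y| = y := abs_of_pos hy0
      have hden : (0:ℝ) < |y| ^ (1+α) := Real.rpow_pos_of_pos (by rw [habs]; exact hy0) _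
      rw [Real.norm_eq_abs, abs_of_nonneg (div_nonneg (le_min (sq_nonneg _) (abs_nonneg _)) hden.le)]
      calc min (y^2) |y| / |y| ^ (1+α) ≤ |y| / |y| ^ (1+α) :=
            div_le_div_of_nonneg_right (min_le_right _ _) hden.le
        _ = y ^ (-α) := by
            rw [habs]
            nth_rewrite 1 [← Real.rpow_one y]
            rw [← Real.rpow_sub hy0]
            congr 1; ring

lemma base_integrable {α : ℝ} (hα1 : 1 < α) (hα2 : α < 2) :
    Integrable (fun y : ℝ => min (y^2) |y| / |y| ^ (1+α)) := by
  rw [← integrableOn_univ, ← Set.Iio_union_Ici (a := (0:ℝ)), integrableOn_union]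
  constructor
  · rw [← (Measure.measurePreserving_neg (volume : Measure ℝ)).integrableOn_comp_preimage
        (Homeomorph.neg ℝ).measurableEmbedding]
    simp only [Function.comp_def, neg_sq, abs_neg, Set.neg_preimage, Set.neg_Iio, neg_zero,
      neg_neg]
    exact base_Ioi hα1 hα2
  · rw [integrableOn_Ici_iff_integrableOn_Ioi]
    exact base_Ioi hα1 hα2

theorem stmt_aux (m : ℕ) (hm : 1 ≤ m) (μ ξ : Fin m → ℝ)
    (hμ : ∀ i, 0 < μ i) (hξ : ∀ i, 0 < ξ i)
    (α : ℝ) (hα1 : 1 < α) (hα2 : α < 2)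
    (x : Fin m → ℝ) (t : ℝ) (ht : 1 ≤ t) :
    (∀ i : Fin m, Integrable (fun y : ℝ =>
      (Fdiff m μ t (x + Pi.single i y) - Fdiff m μ t x
        - y * fderiv ℝ (Fdiff m μ t) x (Pi.single i 1)) / |y| ^ (1 + α))) ∧
    (0 ≤ ∑ i, ξ i * ∫ y : ℝ,
      (Fdiff m μ t (x + Pi.single i y) - Fdiff m μ t x
        - y * fderiv ℝ (Fdiff m μ t) x (Pi.single i 1)) / |y| ^ (1 + α)) := by
  classical
  set L : (Fin m → ℝ) →L[ℝ] ℝ := ∑ i, (μ i)⁻¹ • ContinuousLinearMap.proj i with hL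
  have hLapp : ∀ z : Fin m → ℝ, L z = ∑ i, z i / μ i := by
    intro z
    simp [hL, ContinuousLinearMap.sum_apply, ContinuousLinearMap.smul_apply,
      ContinuousLinearMap.proj_apply, div_eq_inv_mul, mul_comm]
  have hFdiff : ∀ z, Fdiff m μ t z = Gfun t (L z) := by
    intro z
    rw [hLapp]
    unfold Fdiff Ffun chiR Gfun
    ring
  have hFeq : Fdiff m μ t = fun w => Gfun t (L w) := funext hFdiff
  have hHasF : ∀ z, HasFDerivAt (Fdiff m μ t) (Dfun t (L z) • L) z := by
    intro z
    rw [hFeq]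
    exact (hasDerivAt_G t (L z)).comp_hasFDerivAt z L.hasFDerivAt
  set s : ℝ := L x with hs
  have hLsingle : ∀ (i : Fin m) (y : ℝ), L (Pi.single i y) = (μ i)⁻¹ * y := by
    intro i y
    simp [hL, ContinuousLinearMap.sum_apply, ContinuousLinearMap.smul_apply,
      ContinuousLinearMap.proj_apply, Pi.single_apply, mul_ite, Finset.sum_ite_eq',
      smul_eq_mul]
  have hfderiv : ∀ i : Fin m, fderiv ℝ (Fdiff m μ t) x (Pi.single i 1)
      = Dfun t s * (μ i)⁻¹ := by
    intro i
    calc fderiv ℝ (Fdiff m μ t) x (Pi.single i 1)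
        = (Dfun t (L x) • L) (Pi.single i 1) := by rw [(hHasF x).fderiv]
      _ = Dfun t s * L (Pi.single i 1) := rfl
      _ = Dfun t s * (μ i)⁻¹ := by rw [hLsingle i 1, mul_one]
  have key : ∀ i : Fin m, Integrable (fun y : ℝ =>
      (Fdiff m μ t (x + Pi.single i y) - Fdiff m μ t x
        - y * fderiv ℝ (Fdiff m μ t) x (Pi.single i 1)) / |y| ^ (1 + α)) ∧
      (∀ y : ℝ, 0 ≤ (Fdiff m μ t (x + Pi.single i y) - Fdiff m μ t x
        - y * fderiv ℝ (Fdiff m μ t) x (Pi.single i 1)) / |y| ^ (1 + α)) := by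
    intro i
    set c : ℝ := (μ i)⁻¹ with hcdef
    have hc : 0 < c := inv_pos.2 (hμ i)
    have harg : ∀ y : ℝ, L (x + Pi.single i y) = s + c * y := by
      intro y
      rw [map_add, hs, hLsingle i y, hcdef]
    have hrw : (fun y : ℝ => (Fdiff m μ t (x + Pi.single i y) - Fdiff m μ t x
          - y * fderiv ℝ (Fdiff m μ t) x (Pi.single i 1)) / |y| ^ (1 + α))
        = fun y : ℝ => (Gfun t (s + c * y) - Gfun t s - (c * y) * Dfun t s) / |y| ^ (1 + α) := by
      funext y
      rw [hFdiff, hFdiff, harg, hfderiv i, hs]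
      congr 1
      ring
    set q : ℝ → ℝ := fun y => Gfun t (s + c * y) - Gfun t s - (c * y) * Dfun t s with hq
    have hq0 : ∀ y, 0 ≤ q y := by
      intro y
      have h := (G_tangent t s (s + c * y)).1
      rw [add_sub_cancel_left] at h
      simp only [hq]
      linarith [h, mul_comm (Dfun t s) (c * y)]
    have hq2 : ∀ y, q y ≤ 3 * c ^ 2 * y ^ 2 := by
      intro y
      have h := (G_tangent t s (s + c * y)).2
      rw [add_sub_cancel_left] at h
      have hlip := Dfun_lip t s (s + c * y)
      rw [add_sub_cancel_left] at hlip
      have h1 : (Dfun t (s + c * y) - Dfun t s) * (c * y)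
          ≤ |Dfun t (s + c * y) - Dfun t s| * |c * y| := by
        calc (Dfun t (s + c * y) - Dfun t s) * (c * y)
            ≤ |(Dfun t (s + c * y) - Dfun t s) * (c * y)| := le_abs_self _
          _ = _ := abs_mul _ _
      have h2 : |Dfun t (s + c * y) - Dfun t s| * |c * y| ≤ (3 * |c * y|) * |c * y| :=
        mul_le_mul_of_nonneg_right hlip (abs_nonneg _)
      have h3 : (3 * |c * y|) * |c * y| = 3 * c ^ 2 * y ^ 2 := by
        rw [show (3 * |c * y|) * |c * y| = 3 * (|c * y| * |c * y|) by ring,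
          abs_mul_abs_self]
        ring
      simp only [hq]
      nlinarith [h, h1, h2]
    have hq1 : ∀ y, q y ≤ 2 * c * |y| := by
      intro y
      have hG := G_lip t s (s + c * y)
      rw [add_sub_cancel_left] at hG
      have habs : |c * y| = c * |y| := by rw [abs_mul, abs_of_pos hc]
      have hD0 := Dfun_nonneg t s
      have hD1 := Dfun_le_one t s
      have h1 : Gfun t (s + c * y) - Gfun t s ≤ c * |y| := by
        calc Gfun t (s + c * y) - Gfun t s ≤ |Gfun t (s + c * y) - Gfun t s| := le_abs_self _
          _ ≤ c * |y| := by rw [← habs]; exact hG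
      have h2 : -((c * y) * Dfun t s) ≤ c * |y| := by
        have : |(c * y) * Dfun t s| ≤ |c * y| * 1 := by
          rw [abs_mul]
          exact mul_le_mul_of_nonneg_left (by rw [abs_of_nonneg hD0]; exact hD1) (abs_nonneg _)
        rw [mul_one, habs] at this
        linarith [neg_abs_le ((c * y) * Dfun t s), this]
      simp only [hq]
      linarith
    set C : ℝ := max (3 * c ^ 2) (2 * c) with hC
    have hCb : ∀ y : ℝ, q y ≤ C * min (y ^ 2) |y| := by
      intro y
      rcases le_total (y ^ 2) |y| with h | h
      · rw [min_eq_left h]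
        calc q y ≤ 3 * c ^ 2 * y ^ 2 := hq2 y
          _ ≤ C * y ^ 2 := mul_le_mul_of_nonneg_right (le_max_left _ _) (sq_nonneg _)
      · rw [min_eq_right h]
        calc q y ≤ 2 * c * |y| := hq1 y
          _ ≤ C * |y| := mul_le_mul_of_nonneg_right (le_max_right _ _) (abs_nonneg _)
    have hqcont : Continuous q := by
      have hGc : Continuous (Gfun t) := by
        rw [continuous_iff_continuousAt]
        exact fun v => (hasDerivAt_G t v).continuousAt
      apply Continuous.sub
      apply Continuous.sub
      · exact hGc.comp (continuous_const.add (continuous_const.mul continuous_id))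
      · exact continuous_const
      · exact (continuous_const.mul continuous_id).mul continuous_const
    have hint : Integrable (fun y : ℝ => q y / |y| ^ (1 + α)) := by
      apply Integrable.mono' ((base_integrable hα1 hα2).const_mul C)
      · exact (hqcont.measurable.div (by fun_prop)).aestronglyMeasurable
      · apply Filter.Eventually.of_forall
        intro y
        have hden : (0:ℝ) ≤ |y| ^ (1 + α) := Real.rpow_nonneg (abs_nonneg y) _
        rw [Real.norm_eq_abs, abs_of_nonneg (div_nonneg (hq0 y) hden),
          show C * (min (y ^ 2) |y| / |y| ^ (1 + α)) = C * min (y ^ 2) |y| / |y| ^ (1 + α)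
            from (mul_div_assoc _ _ _).symm]
        exact div_le_div_of_nonneg_right (hCb y) hden
    constructor
    · rw [hrw]; exact hint
    · intro y
      rw [congrFun hrw y]
      exact div_nonneg (hq0 y) (Real.rpow_nonneg (abs_nonneg y) _)
  constructor
  · exact fun i => (key i).1
  · apply Finset.sum_nonneg
    intro i _
    exact mul_nonneg (hξ i).le (integral_nonneg (key i).2)


/-- For every `x ∈ ℝ^m` and `t ≥ 1`, the integrals defining `I_α(F - F_{1,t})(x)`
converge absolutely, and `I_α(F - F_{1,t})(x) ≥ 0`. -/
theorem stmt_11 (m : ℕ) (hm : 1 ≤ m) (μ ξ : Fin m → ℝ)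
    (hμ : ∀ i, 0 < μ i) (hξ : ∀ i, 0 < ξ i)
    (α : ℝ) (hα1 : 1 < α) (hα2 : α < 2)
    (x : Fin m → ℝ) (t : ℝ) (ht : 1 ≤ t) :
    IalphaConv m α (Fdiff m μ t) x ∧ 0 ≤ Ialpha m α ξ (Fdiff m μ t) x := by
  obtain ⟨h1, h2⟩ := stmt_aux m hm μ ξ hμ hξ α hα1 hα2 x t ht
  exact ⟨h1, h2⟩

end
end

section
/- There exists a positive constant κ̂ (depending only on m, α, the μ_i, and the ξ_i) such that I_α(F - F_{1,t})(0) ≥ κ̂ t^{1-α} for all t ≥ 1. -/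
open scoped BigOperators
open MeasureTheory

noncomputable section

/-- `qf u = u + ψ(-u)` -/
def qf (u : ℝ) : ℝ := u + psi (-u)

lemma psi_of_nonneg {u : ℝ} (h : 0 ≤ u) : psi u = u := by
  unfold psi
  split_ifs with h1 h2
  · linarith
  · have : u = 0 := le_antisymm h2 h
    subst this; norm_num
  · rfl

lemma psi_nonpos {u : ℝ} (h : u ≤ 0) : psi u ≤ 0 := by
  unfold psi
  rcases le_or_gt u (-1) with h1 | h1
  · rw [if_pos h1]; norm_num
  · rw [if_neg (by linarith), if_pos h]
    nlinarith [sq_nonneg (u+1), sq_nonneg u, sq_nonneg ((u+1)^2 - 1)]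

lemma psi_measurable : Measurable psi := by
  unfold psi
  refine Measurable.ite (measurableSet_le measurable_id measurable_const) measurable_const ?_
  exact Measurable.ite (measurableSet_le measurable_id measurable_const)
    (by fun_prop) measurable_id

lemma qf_of_nonpos {u : ℝ} (h : u ≤ 0) : qf u = 0 := by
  unfold qf
  rw [psi_of_nonneg (by linarith)]; ring

lemma qf_of_one_le {u : ℝ} (h : 1 ≤ u) : qf u = u - 1/2 := by
  unfold qf psi
  rw [if_pos (by linarith)]; ring

lemma qf_of_mem {u : ℝ} (h0 : 0 ≤ u) (h1 : u ≤ 1) : qf u = u^3 - u^4/2 := by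
  rcases eq_or_lt_of_le h1 with rfl | h1
  · rw [qf_of_one_le le_rfl]; norm_num
  · unfold qf psi
    rw [if_neg (by linarith), if_pos (by linarith)]
    ring

lemma u4_le_u3 {u : ℝ} (h0 : 0 ≤ u) (h1 : u ≤ 1) : u^4 ≤ u^3 := by
  nlinarith [pow_nonneg h0 3]

lemma qf_nonneg (u : ℝ) : 0 ≤ qf u := by
  rcases le_or_gt u 0 with hu | hu
  · rw [qf_of_nonpos hu]
  rcases le_or_gt 1 u with h1 | h1
  · rw [qf_of_one_le h1]; linarith
  · rw [qf_of_mem hu.le h1.le]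
    nlinarith [u4_le_u3 hu.le h1.le, pow_nonneg hu.le 3]

lemma qf_le_cube {u c : ℝ} (h : u ≤ c) (hc : 0 ≤ c) : qf u ≤ c^3 := by
  rcases le_or_gt u 0 with hu | hu
  · rw [qf_of_nonpos hu]; positivity
  have hcu : u^3 ≤ c^3 := pow_le_pow_left₀ hu.le h 3
  rcases le_or_gt 1 u with h1 | h1
  · rw [qf_of_one_le h1]
    nlinarith [sq_nonneg u, sq_nonneg (u-1)]
  · rw [qf_of_mem hu.le h1.le]
    nlinarith [pow_nonneg hu.le 4]

lemma qf_le_lin {u c : ℝ} (h : u ≤ c) (hc : 0 ≤ c) : qf u ≤ c := by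
  rcases le_or_gt u 0 with hu | hu
  · rw [qf_of_nonpos hu]; exact hc
  rcases le_or_gt 1 u with h1 | h1
  · rw [qf_of_one_le h1]; linarith
  · rw [qf_of_mem hu.le h1.le]
    nlinarith [u4_le_u3 hu.le h1.le, pow_nonneg hu.le 2]

lemma Fdiff_eq (m : ℕ) (μ : Fin m → ℝ) (t : ℝ) (x : Fin m → ℝ) :
    Fdiff m μ t x = 1 + qf (Ffun m μ x - t) := by
  unfold Fdiff chiR chibreve qf
  rw [neg_sub]
  ring

lemma psi_le_abs (u : ℝ) : psi u ≤ |u| := by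
  rcases le_or_gt 0 u with h | h
  · rw [psi_of_nonneg h]; exact le_abs_self u
  · exact (psi_nonpos h.le).trans (abs_nonneg u)

lemma Ffun_zero (m : ℕ) (μ : Fin m → ℝ) : Ffun m μ 0 = 1 := by
  unfold Ffun chibreve
  simp [psi_of_nonneg le_rfl]

lemma Fdiff_zero (m : ℕ) (μ : Fin m → ℝ) {t : ℝ} (ht : 1 ≤ t) : Fdiff m μ t 0 = 1 := by
  rw [Fdiff_eq, Ffun_zero, qf_of_nonpos (by linarith)]
  ring

lemma Ffun_sub_le (m : ℕ) (μ : Fin m → ℝ) (hμ : ∀ i, 0 < μ i) {t : ℝ} (ht : 1 ≤ t)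
    (x : Fin m → ℝ) : Ffun m μ x - t ≤ (∑ i, 1 / μ i) * ‖x‖ := by
  unfold Ffun chibreve
  have h1 : psi (∑ i, x i / μ i) ≤ |∑ i, x i / μ i| := psi_le_abs _
  have h2 : |∑ i, x i / μ i| ≤ ∑ i, |x i| / μ i := by
    refine (Finset.abs_sum_le_sum_abs _ _).trans ?_
    refine Finset.sum_le_sum fun i _ => ?_
    rw [abs_div, abs_of_pos (hμ i)]
  have h3 : ∑ i, |x i| / μ i ≤ ∑ i, ‖x‖ / μ i := by
    refine Finset.sum_le_sum fun i _ => ?_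
    have hx : |x i| ≤ ‖x‖ := by simpa using norm_le_pi_norm x i
    gcongr
    exact (hμ i).le
  have h4 : ∑ i, ‖x‖ / μ i = (∑ i, 1 / μ i) * ‖x‖ := by
    rw [Finset.sum_mul]
    exact Finset.sum_congr rfl fun i _ => by ring
  linarith

lemma hasFDerivAt_Fdiff (m : ℕ) (μ : Fin m → ℝ) (hμ : ∀ i, 0 < μ i) {t : ℝ} (ht : 1 ≤ t) :
    HasFDerivAt (Fdiff m μ t) (0 : (Fin m → ℝ) →L[ℝ] ℝ) 0 := by
  rw [hasFDerivAt_iff_isLittleO_nhds_zero]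
  have key : ∀ x : Fin m → ℝ,
      ‖Fdiff m μ t (0 + x) - Fdiff m μ t 0 - (0 : (Fin m → ℝ) →L[ℝ] ℝ) x‖
        ≤ (∑ i, 1 / μ i)^3 * ‖x‖^3 := by
    intro x
    rw [zero_add, Fdiff_zero m μ ht, ContinuousLinearMap.zero_apply, sub_zero, Fdiff_eq,
      add_sub_cancel_left]
    have hK : 0 ≤ ∑ i, 1 / μ i := Finset.sum_nonneg fun i _ => one_div_nonneg.mpr (hμ i).le
    have hb := qf_le_cube (Ffun_sub_le m μ hμ ht x) (mul_nonneg hK (norm_nonneg x))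
    rw [Real.norm_eq_abs, abs_of_nonneg (qf_nonneg _)]
    calc qf (Ffun m μ x - t) ≤ ((∑ i, 1 / μ i) * ‖x‖)^3 := hb
      _ = (∑ i, 1 / μ i)^3 * ‖x‖^3 := by ring
  have h1 : (fun x : Fin m → ℝ =>
      Fdiff m μ t (0 + x) - Fdiff m μ t 0 - (0 : (Fin m → ℝ) →L[ℝ] ℝ) x)
      =O[nhds 0] fun x => ‖x‖^3 := by
    rw [Asymptotics.isBigO_iff]
    exact ⟨(∑ i, 1 / μ i)^3, Filter.Eventually.of_forall fun x => by
      simpa [abs_of_nonneg (pow_nonneg (norm_nonneg x) 3)] using key x⟩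
  have h3 : (fun y : ℝ => y^3) =o[nhds 0] fun y : ℝ => y^1 :=
    Asymptotics.isLittleO_pow_pow (by norm_num)
  have h2 : (fun x : Fin m → ℝ => ‖x‖^3) =o[nhds 0] fun x : Fin m → ℝ => x := by
    rw [← Asymptotics.isLittleO_norm_right]
    simpa [pow_one, Function.comp_def] using h3.comp_tendsto tendsto_norm_zero
  exact h1.trans_isLittleO h2


section G
open Set

variable {c α t : ℝ} (hc : 0 < c) (hα1 : 1 < α) (hα2 : α < 2) (ht : 1 ≤ t)

/-- the integrand along coordinate direction with scale `c` -/
def gfun (c α t : ℝ) (y : ℝ) : ℝ := qf (1 + psi (y / c) - t) / |y| ^ (1 + α)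

lemma gfun_nonneg (y : ℝ) : 0 ≤ gfun c α t y :=
  div_nonneg (qf_nonneg _) (Real.rpow_nonneg (abs_nonneg y) _)

include hc ht in
lemma gfun_num_eq_zero {y : ℝ} (hy : y ≤ 0) : qf (1 + psi (y / c) - t) = 0 := by
  have h1 : y / c ≤ 0 := div_nonpos_iff.mpr (Or.inr ⟨hy, hc.le⟩)
  exact qf_of_nonpos (by have := psi_nonpos h1; linarith)

include hc in
lemma gfun_num_pos_arg {y : ℝ} (hy : 0 < y) :
    qf (1 + psi (y / c) - t) = qf (1 + y / c - t) := by
  rw [psi_of_nonneg (le_of_lt (div_pos hy hc))]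

include hα1 in
lemma gfun_measurable : Measurable (gfun c α t) := by
  have hqf : Measurable qf := measurable_id.add (psi_measurable.comp measurable_neg)
  have hnum : Measurable fun y : ℝ => qf (1 + psi (y / c) - t) :=
    hqf.comp (((psi_measurable.comp (measurable_id.div_const c)).const_add 1).sub
      measurable_const)
  have hden : Measurable fun y : ℝ => |y| ^ (1 + α) :=
    ((Real.continuous_rpow_const (by linarith)).comp continuous_abs).measurable
  exact hnum.div hden

include hc hα1 hα2 ht in
lemma gfun_integrable : Integrable (gfun c α t) := by
  have hmeas := gfun_measurable (c := c) (t := t) hα1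
  rw [← integrableOn_univ, ← Set.Iic_union_Ioi (a := (0:ℝ)),
    ← Set.Ioc_union_Ioi_eq_Ioi hc.le, ← Set.union_assoc]
  have hIic : IntegrableOn (gfun c α t) (Iic 0) := by
    refine (integrableOn_zero (ε' := ℝ)).congr_fun (fun y hy => ?_) measurableSet_Iic
    simp [gfun, gfun_num_eq_zero hc ht hy]
  have hIoc : IntegrableOn (gfun c α t) (Ioc 0 c) := by
    have hmaj : IntegrableOn (fun y : ℝ => (1/c^3) * y ^ ((2:ℝ) - α)) (Ioc 0 c) := by
      have := (intervalIntegral.integrableOn_Ioo_rpow_iff hc (s := 2 - α)).mpr (by linarith)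
      exact (this.congr_set_ae Ioo_ae_eq_Ioc.symm).const_mul _
    refine hmaj.integrable.mono hmeas.aestronglyMeasurable.restrict ?_
    rw [ae_restrict_iff' measurableSet_Ioc]
    refine ae_of_all _ fun y hy => ?_
    obtain ⟨hy0, hyc⟩ := hy
    rw [Real.norm_eq_abs, abs_of_nonneg (gfun_nonneg y), Real.norm_eq_abs]
    have hd : (0:ℝ) < y ^ (1 + α) := Real.rpow_pos_of_pos hy0 _
    have hnum : qf (1 + psi (y / c) - t) ≤ (y/c)^3 := by
      rw [gfun_num_pos_arg hc hy0]
      exact qf_le_cube (by have : 0 < y / c := div_pos hy0 hc; linarith)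
        (le_of_lt (div_pos hy0 hc))
    have heq : (1/c^3) * y ^ ((2:ℝ) - α) = ((y/c)^3) / y ^ (1 + α) := by
      rw [div_pow, div_div, show ((y:ℝ)^3 : ℝ) = y ^ ((3:ℝ)) from
        (Real.rpow_natCast y 3).symm ▸ (by norm_num)]
      rw [show ((2:ℝ) - α) = (3:ℝ) - (1+α) by ring, Real.rpow_sub hy0]
      field_simp
    rw [abs_of_nonneg (by positivity : (0:ℝ) ≤ (1/c^3) * y ^ ((2:ℝ) - α)), heq]
    unfold gfun
    rw [abs_of_pos hy0]
    exact div_le_div_of_nonneg_right hnum hd.le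
  have hIoi : IntegrableOn (gfun c α t) (Ioi c) := by
    have hmaj : IntegrableOn (fun y : ℝ => (1/c) * y ^ (-α)) (Ioi c) :=
      (integrableOn_Ioi_rpow_of_lt (by linarith) hc).const_mul _
    refine hmaj.integrable.mono hmeas.aestronglyMeasurable.restrict ?_
    rw [ae_restrict_iff' measurableSet_Ioi]
    refine ae_of_all _ fun y hy => ?_
    have hy0 : 0 < y := hc.trans hy
    rw [Real.norm_eq_abs, abs_of_nonneg (gfun_nonneg y), Real.norm_eq_abs]
    have hd : (0:ℝ) < y ^ (1 + α) := Real.rpow_pos_of_pos hy0 _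
    have hnum : qf (1 + psi (y / c) - t) ≤ y/c := by
      rw [gfun_num_pos_arg hc hy0]
      exact qf_le_lin (by have : 0 < y / c := div_pos hy0 hc; linarith)
        (le_of_lt (div_pos hy0 hc))
    have heq : (1/c) * y ^ (-α) = (y/c) / y ^ (1 + α) := by
      rw [show (-α) = (1:ℝ) - (1+α) by ring, Real.rpow_sub hy0, Real.rpow_one]
      field_simp
    rw [abs_of_nonneg (by positivity : (0:ℝ) ≤ (1/c) * y ^ (-α)), heq]
    unfold gfun
    rw [abs_of_pos hy0]
    exact div_le_div_of_nonneg_right hnum hd.le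
  exact (hIic.union hIoc).union hIoi

include hc hα1 hα2 ht in
lemma gfun_integral_lower :
    (2 * c) ^ (1 - α) / (2 * c * (α - 1)) * t ^ (1 - α) ≤ ∫ y : ℝ, gfun c α t y := by
  have hct : (0:ℝ) < 2 * c * t := by positivity
  have hint := gfun_integrable hc hα1 hα2 ht
  have h1 : ∫ y in Ioi (2*c*t), gfun c α t y ≤ ∫ y : ℝ, gfun c α t y :=
    setIntegral_le_integral hint (ae_of_all _ gfun_nonneg)
  have h2 : ∫ y in Ioi (2*c*t), (1/(2*c)) * y ^ (-α) ≤ ∫ y in Ioi (2*c*t), gfun c α t y := by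
    refine setIntegral_mono_on
      ((integrableOn_Ioi_rpow_of_lt (by linarith) hct).const_mul _)
      hint.integrableOn measurableSet_Ioi fun y hy => ?_
    rw [mem_Ioi] at hy
    have hy0 : 0 < y := hct.trans hy
    have hyc : 2 * c * t ≤ y := hy.le
    have hu : (1:ℝ) ≤ 1 + y / c - t := by
      have : 2 * t ≤ y / c := by rw [le_div_iff₀ hc]; linarith
      linarith
    have hnum : y / (2*c) ≤ qf (1 + psi (y / c) - t) := by
      rw [gfun_num_pos_arg hc hy0, qf_of_one_le hu]
      have h2t : t ≤ y / (2*c) := by rw [le_div_iff₀ (by positivity)]; linarith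
      have hhalf : y / (2*c) = (y/c)/2 := by ring
      have : y / c - t ≥ y / (2*c) := by
        rw [ge_iff_le, hhalf]
        have : t ≤ (y/c)/2 := by rw [hhalf] at h2t; exact h2t
        linarith
      linarith
    have heq : (1/(2*c)) * y ^ (-α) = (y/(2*c)) / y ^ (1 + α) := by
      rw [show (-α) = (1:ℝ) - (1+α) by ring, Real.rpow_sub hy0, Real.rpow_one]
      field_simp
    rw [heq]
    unfold gfun
    rw [abs_of_pos hy0]
    have hd : (0:ℝ) < y ^ (1 + α) := Real.rpow_pos_of_pos hy0 _
    exact div_le_div_of_nonneg_right hnum hd.le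
  have h3 : ∫ y in Ioi (2*c*t), (1/(2*c)) * y ^ (-α)
      = (1/(2*c)) * (-(2*c*t) ^ (-α + 1) / (-α + 1)) := by
    rw [MeasureTheory.integral_const_mul, integral_Ioi_rpow_of_lt (by linarith) hct]
  have h4 : (1/(2*c)) * (-(2*c*t) ^ (-α + 1) / (-α + 1))
      = (2 * c) ^ (1 - α) / (2 * c * (α - 1)) * t ^ (1 - α) := by
    have hmul : (2*c*t) ^ (-α+1) = (2*c) ^ (-α+1) * t ^ (-α+1) :=
      Real.mul_rpow (by positivity) (by positivity)
    rw [hmul, show (-α + 1) = 1 - α by ring]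
    have hne : α - 1 ≠ 0 := by intro h; linarith
    have h1α : 1 - α ≠ 0 := by intro h; linarith
    have hc2 : (2:ℝ) * c ≠ 0 := by positivity
    field_simp
    ring
  rw [h3, h4] at h2
  linarith

end G

lemma Ffun_single (m : ℕ) (μ : Fin m → ℝ) (i : Fin m) (y : ℝ) :
    Ffun m μ (Pi.single i y) = 1 + psi (y / μ i) := by
  unfold Ffun chibreve
  congr 2
  rw [Finset.sum_eq_single i (fun j _ hj => by rw [Pi.single_eq_of_ne hj, zero_div])
    (fun h => absurd (Finset.mem_univ i) h), Pi.single_eq_same]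

/-- There is a constant `κ̂ > 0` (depending only on `m`, `α`, the `μ_i` and the
`ξ_i`) such that `I_α(F - F_{1,t})(0) ≥ κ̂ t^{1-α}` for all `t ≥ 1`. -/
theorem stmt_12 (m : ℕ) (hm : 1 ≤ m) (μ ξ : Fin m → ℝ)
    (hμ : ∀ i, 0 < μ i) (hξ : ∀ i, 0 < ξ i)
    (α : ℝ) (hα1 : 1 < α) (hα2 : α < 2) :
    ∃ κ : ℝ, 0 < κ ∧ ∀ t : ℝ, 1 ≤ t →
      κ * t ^ (1 - α) ≤ Ialpha m α ξ (Fdiff m μ t) 0 := by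
  have i0 : Fin m := ⟨0, hm⟩
  refine ⟨ξ i0 * ((2 * μ i0) ^ (1 - α) / (2 * μ i0 * (α - 1))), ?_, ?_⟩
  · have h0 : (0:ℝ) < 2 * μ i0 := by have := hμ i0; linarith
    have h1 : (0:ℝ) < (2 * μ i0) ^ (1 - α) := Real.rpow_pos_of_pos h0 _
    exact mul_pos (hξ i0) (div_pos h1 (mul_pos h0 (by linarith)))
  · intro t ht
    have hfd : fderiv ℝ (Fdiff m μ t) 0 = 0 := (hasFDerivAt_Fdiff m μ hμ ht).fderiv
    have hrw : Ialpha m α ξ (Fdiff m μ t) 0 = ∑ i, ξ i * ∫ y : ℝ, gfun (μ i) α t y := by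
      unfold Ialpha
      refine Finset.sum_congr rfl fun i _ => ?_
      congr 1
      refine congrArg _ (funext fun y => ?_)
      rw [hfd, zero_add, Fdiff_zero m μ ht]
      simp only [ContinuousLinearMap.zero_apply, mul_zero, sub_zero]
      rw [Fdiff_eq, Ffun_single]
      unfold gfun
      rw [add_sub_cancel_left]
    rw [hrw]
    have hterm : ∀ i ∈ Finset.univ, (0:ℝ) ≤ ξ i * ∫ y : ℝ, gfun (μ i) α t y :=
      fun i _ => mul_nonneg (hξ i).le (integral_nonneg gfun_nonneg)
    have hsingle := Finset.single_le_sum hterm (Finset.mem_univ i0)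
    have hlow := gfun_integral_lower (hμ i0) hα1 hα2 ht
    have h2 : ξ i0 * ((2 * μ i0) ^ (1 - α) / (2 * μ i0 * (α - 1))) * t ^ (1 - α)
        ≤ ξ i0 * ∫ y : ℝ, gfun (μ i0) α t y := by
      rw [mul_assoc]
      exact mul_le_mul_of_nonneg_left hlow (hξ i0).le
    exact h2.trans hsingle


end
end
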